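/- arXiv:2410.02496 — 2 statements merged into one kernel-verified Lean document; each statement's English description precedes it below -/
import Mathlib

section
/- Suppose Σ̂ and Σ̂' are positive semidefinite and λ > 0. If Δ ∈ ℝ^{d×d} minimizes F_λ, A = {i ∈ [d²] : vec(Δ)_i ≠ 0} is its active set, s_A = sign(vec(Δ)_A) is the vector of active signs, and the principal submatrix Γ_{A,A} is invertible, then vec(Δ)_A = −(Γ_{A,A})⁻¹ (v_A + λ s_A); in particular Δ is the unique minimizer of F_λ among matrices with active set A and active signs s_A. -/
open Matrix
open scoped Kronecker

/-- Trace inner product ⟨A, B⟩ = tr(A Bᵀ). -/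
noncomputable def mInner {d : ℕ} (A B : Matrix (Fin d) (Fin d) ℝ) : ℝ :=
  Matrix.trace (A * Bᵀ)

/-- The D-trace loss L_D(Δ; Σ̂, Σ̂'). -/
noncomputable def LD {d : ℕ} (S S' Δ : Matrix (Fin d) (Fin d) ℝ) : ℝ :=
  (1 / 4) * (mInner (S * Δ) (Δ * S') + mInner (S' * Δ) (Δ * S)) - mInner Δ (S - S')

/-- The lasso penalized D-trace objective F_λ(Δ) = L_D(Δ) + λ‖Δ‖₁. -/
noncomputable def Fobj {d : ℕ} (S S' : Matrix (Fin d) (Fin d) ℝ) (lam : ℝ)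
    (Δ : Matrix (Fin d) (Fin d) ℝ) : ℝ :=
  LD S S' Δ + lam * ∑ i, ∑ j, |Δ i j|

/-- Column-stacking vectorization: `vecM Δ (c, r) = Δ r c`. -/
def vecM {d : ℕ} (Δ : Matrix (Fin d) (Fin d) ℝ) : Fin d × Fin d → ℝ :=
  fun p => Δ p.2 p.1

/-- Γ = (Σ̂ ⊗ Σ̂' + Σ̂' ⊗ Σ̂)/2. -/
noncomputable def Gam {d : ℕ} (S S' : Matrix (Fin d) (Fin d) ℝ) :
    Matrix (Fin d × Fin d) (Fin d × Fin d) ℝ :=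
  (1 / 2 : ℝ) • (S ⊗ₖ S' + S' ⊗ₖ S)

/-- v = vec(Σ̂' − Σ̂). -/
noncomputable def vv {d : ℕ} (S S' : Matrix (Fin d) (Fin d) ℝ) : Fin d × Fin d → ℝ :=
  vecM (S' - S)

/-- The principal submatrix Γ_{A,A} of a d²×d² matrix, indexed by a finite
index set A ⊆ [d²]. -/
noncomputable def subAA {d : ℕ} (G : Matrix (Fin d × Fin d) (Fin d × Fin d) ℝ)
    (A : Finset (Fin d × Fin d)) : Matrix {i // i ∈ A} {i // i ∈ A} ℝ :=
  G.submatrix Subtype.val Subtype.val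

lemma vec_dot {d : ℕ} (X Y : Matrix (Fin d) (Fin d) ℝ) :
    vecM X ⬝ᵥ vecM Y = mInner X Y := by
  simp only [dotProduct, vecM, mInner, Matrix.trace, Matrix.mul_apply,
    Matrix.transpose_apply, Matrix.diag, Fintype.sum_prod_type]
  exact Finset.sum_comm

lemma mulVec_kron {d : ℕ} (S S' Δ : Matrix (Fin d) (Fin d) ℝ) :
    (S ⊗ₖ S') *ᵥ (vecM Δ) = vecM (S' * Δ * Sᵀ) := by
  funext p
  simp only [Matrix.mulVec, dotProduct, vecM, Matrix.kroneckerMap_apply,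
    Fintype.sum_prod_type, Matrix.mul_apply, Matrix.transpose_apply,
    Finset.sum_mul, Finset.mul_sum]
  refine Finset.sum_congr rfl fun c' _ => Finset.sum_congr rfl fun r' _ => by ring

lemma LD_eq {d : ℕ} (S S' Δ : Matrix (Fin d) (Fin d) ℝ)
    (hS : Sᵀ = S) (hS' : S'ᵀ = S') :
    LD S S' Δ = (1/2) * (vecM Δ ⬝ᵥ (Gam S S') *ᵥ (vecM Δ)) + vecM Δ ⬝ᵥ vv S S' := by
  have k1 : vecM Δ ⬝ᵥ (S ⊗ₖ S') *ᵥ (vecM Δ) = mInner (S' * Δ) (Δ * S) := by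
    rw [mulVec_kron, vec_dot]
    unfold mInner
    have h1 : (S' * Δ * Sᵀ)ᵀ = S * Δᵀ * S' := by
      rw [Matrix.transpose_mul, Matrix.transpose_mul, Matrix.transpose_transpose, hS',
        Matrix.mul_assoc]
    have h2 : (Δ * S)ᵀ = S * Δᵀ := by rw [Matrix.transpose_mul, hS]
    rw [h1, h2]
    rw [show Δ * (S * Δᵀ * S') = (Δ * S * Δᵀ) * S' by noncomm_ring,
      Matrix.trace_mul_comm]
    congr 1
    noncomm_ring
  have k2 : vecM Δ ⬝ᵥ (S' ⊗ₖ S) *ᵥ (vecM Δ) = mInner (S * Δ) (Δ * S') := by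
    rw [mulVec_kron, vec_dot]
    unfold mInner
    have h1 : (S * Δ * S'ᵀ)ᵀ = S' * Δᵀ * S := by
      rw [Matrix.transpose_mul, Matrix.transpose_mul, Matrix.transpose_transpose, hS,
        Matrix.mul_assoc]
    have h2 : (Δ * S')ᵀ = S' * Δᵀ := by rw [Matrix.transpose_mul, hS']
    rw [h1, h2]
    rw [show Δ * (S' * Δᵀ * S) = (Δ * S' * Δᵀ) * S by noncomm_ring,
      Matrix.trace_mul_comm]
    congr 1
    noncomm_ring
  have klin : vecM Δ ⬝ᵥ vv S S' = - mInner Δ (S - S') := by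
    rw [vv, vec_dot]
    unfold mInner
    simp [Matrix.transpose_sub, Matrix.mul_sub, Matrix.trace_sub]
  have hG : (Gam S S') *ᵥ (vecM Δ)
      = (1/2 : ℝ) • ((S ⊗ₖ S') *ᵥ (vecM Δ) + (S' ⊗ₖ S) *ᵥ (vecM Δ)) := by
    rw [Gam, Matrix.smul_mulVec, Matrix.add_mulVec]
  rw [hG, dotProduct_smul, dotProduct_add, k1, k2, klin, LD, smul_eq_mul]
  ring

lemma expand {n : Type*} [Fintype n] [DecidableEq n]
    (G : Matrix n n ℝ) (hG : Gᵀ = G) (w x : n → ℝ) (p : n) (t : ℝ) :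
    (1/2) * ((x + Pi.single p t) ⬝ᵥ G *ᵥ (x + Pi.single p t)) + (x + Pi.single p t) ⬝ᵥ w
      = ((1/2) * (x ⬝ᵥ G *ᵥ x) + x ⬝ᵥ w)
        + ((G *ᵥ x + w) p) * t + ((1/2) * G p p) * t^2 := by
  have hsym : x ⬝ᵥ G *ᵥ Pi.single p t = (G *ᵥ x) p * t := by
    rw [Matrix.dotProduct_mulVec, ← Matrix.mulVec_transpose, hG, dotProduct_single]
  rw [Matrix.mulVec_add, dotProduct_add, add_dotProduct, add_dotProduct,
    single_dotProduct, single_dotProduct, hsym,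
    Matrix.mulVec_single]
  simp only [Pi.add_apply, Matrix.mulVec_single, add_dotProduct, single_dotProduct,
    Pi.smul_apply, op_smul_eq_mul, Matrix.col_apply]
  ring

lemma abs_small (a t : ℝ) (h : |t| < |a|) : |a + t| = |a| + Real.sign a * t := by
  rcases lt_trichotomy a 0 with hneg | hz | hpos
  · rw [Real.sign_of_neg hneg, abs_of_neg hneg, abs_of_neg]
    · ring
    · have := abs_lt.mp h; linarith [(abs_of_neg hneg ▸ this.2 : t < -a)]
  · exfalso; rw [hz, abs_zero] at h; exact (abs_nonneg t).not_gt h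
  · rw [Real.sign_of_pos hpos, abs_of_pos hpos, abs_of_pos]
    · ring
    · have := abs_lt.mp h; have h2 := abs_of_pos hpos ▸ this.1; linarith

lemma quad_zero (a b δ : ℝ) (hδ : 0 < δ)
    (h : ∀ t : ℝ, |t| < δ → 0 ≤ a * t + b * t^2) : a = 0 := by
  have key : ∀ c : ℝ, (∀ t : ℝ, |t| < δ → 0 ≤ c * t + b * t^2) → 0 ≤ c := by
    intro c hc
    by_contra hneg
    push_neg at hneg
    set t : ℝ := min (δ/2) ((-c)/(2*(|b|+1))) with ht
    have hb1 : (0:ℝ) < 2*(|b|+1) := by positivity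
    have htpos : 0 < t := lt_min (by linarith) (div_pos (by linarith) hb1)
    have ht1 : t ≤ δ/2 := min_le_left _ _
    have ht2 : t ≤ (-c)/(2*(|b|+1)) := min_le_right _ _
    have htδ : |t| < δ := by rw [abs_of_pos htpos]; linarith
    have h0 := hc t htδ
    have hbt : b * t ≤ |b| * t := mul_le_mul_of_nonneg_right (le_abs_self b) htpos.le
    have h3 : |b| * t ≤ |b| * ((-c)/(2*(|b|+1))) :=
      mul_le_mul_of_nonneg_left ht2 (abs_nonneg b)
    have h4 : |b| * ((-c)/(2*(|b|+1))) ≤ (-c)/2 := by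
      rw [← mul_div_assoc, div_le_div_iff₀ hb1 two_pos]
      nlinarith [abs_nonneg b]
    have h5 : c + b * t < 0 := by nlinarith
    nlinarith
  have h1 : 0 ≤ a := key a h
  have h2 : 0 ≤ -a := key (-a) (fun t htδ => by
    have := h (-t) (by rwa [abs_neg]); nlinarith)
  linarith

lemma gam_symm {d : ℕ} (S S' : Matrix (Fin d) (Fin d) ℝ) (hS : Sᵀ = S) (hS' : S'ᵀ = S') :
    (Gam S S')ᵀ = Gam S S' := by
  rw [Gam, Matrix.transpose_smul, Matrix.transpose_add]
  rw [show (S ⊗ₖ S')ᵀ = Sᵀ ⊗ₖ S'ᵀ from rfl, show (S' ⊗ₖ S)ᵀ = S'ᵀ ⊗ₖ Sᵀ from rfl, hS, hS']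

lemma abs_sum_eq {d : ℕ} (Δ : Matrix (Fin d) (Fin d) ℝ) :
    ∑ i, ∑ j, |Δ i j| = ∑ p : Fin d × Fin d, |vecM Δ p| := by
  rw [Fintype.sum_prod_type]
  exact Finset.sum_comm

lemma Fobj_eq {d : ℕ} (S S' Δ : Matrix (Fin d) (Fin d) ℝ) (lam : ℝ)
    (hS : Sᵀ = S) (hS' : S'ᵀ = S') :
    Fobj S S' lam Δ = (1/2) * (vecM Δ ⬝ᵥ (Gam S S') *ᵥ (vecM Δ)) + vecM Δ ⬝ᵥ vv S S'
      + lam * ∑ p : Fin d × Fin d, |vecM Δ p| := by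
  rw [Fobj, LD_eq S S' Δ hS hS', abs_sum_eq]

lemma vecM_perturb {d : ℕ} (Δ : Matrix (Fin d) (Fin d) ℝ) (p : Fin d × Fin d) (t : ℝ) :
    vecM (Δ + Matrix.single p.2 p.1 t) = vecM Δ + Pi.single p t := by
  funext q
  simp only [vecM, Matrix.add_apply, Pi.add_apply, Matrix.single, Matrix.of_apply,
    Pi.single_apply]
  congr 1
  by_cases h : q = p
  · subst h; simp
  · rw [if_neg (fun hh => h (Prod.ext hh.2.symm hh.1.symm)), if_neg h]

lemma stat {d : ℕ} (S S' : Matrix (Fin d) (Fin d) ℝ)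
    (hS : Sᵀ = S) (hS' : S'ᵀ = S') (lam : ℝ)
    (Δ : Matrix (Fin d) (Fin d) ℝ)
    (hmin : IsMinOn (Fobj S S' lam) Set.univ Δ)
    (p : Fin d × Fin d) (hp : vecM Δ p ≠ 0) :
    ((Gam S S') *ᵥ (vecM Δ) + vv S S') p + lam * Real.sign (vecM Δ p) = 0 := by
  set x := vecM Δ with hx
  set G := Gam S S' with hGdef
  have hδ : 0 < |x p| := abs_pos.mpr hp
  apply quad_zero _ ((1/2) * G p p) (|x p|) hδ
  intro t ht
  have hm : Fobj S S' lam Δ ≤ Fobj S S' lam (Δ + Matrix.single p.2 p.1 t) :=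
    isMinOn_iff.mp hmin _ (Set.mem_univ _)
  rw [Fobj_eq S S' _ lam hS hS', Fobj_eq S S' _ lam hS hS', vecM_perturb] at hm
  rw [expand G (gam_symm S S' hS hS') (vv S S') x p t] at hm
  have habs : ∑ q : Fin d × Fin d, |(x + Pi.single p t : Fin d × Fin d → ℝ) q|
      = (∑ q : Fin d × Fin d, |x q|) + Real.sign (x p) * t := by
    have : ∑ q : Fin d × Fin d, (|(x + Pi.single p t : Fin d × Fin d → ℝ) q| - |x q|)
        = Real.sign (x p) * t := by
      rw [Finset.sum_eq_single p]
      · simp only [Pi.add_apply, Pi.single_eq_same]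
        rw [abs_small (x p) t ht]; ring
      · intro q _ hq
        simp [Pi.single_eq_of_ne hq]
      · intro h; exact absurd (Finset.mem_univ p) h
    rw [Finset.sum_sub_distrib] at this
    linarith
  rw [habs] at hm
  nlinarith [hm]

lemma key {d : ℕ} (S S' : Matrix (Fin d) (Fin d) ℝ)
    (hS : Sᵀ = S) (hS' : S'ᵀ = S') (lam : ℝ)
    (Δ : Matrix (Fin d) (Fin d) ℝ)
    (hmin : IsMinOn (Fobj S S' lam) Set.univ Δ)
    (A : Finset (Fin d × Fin d)) (hA : ∀ i, i ∈ A ↔ vecM Δ i ≠ 0)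
    (hinv : IsUnit (subAA (Gam S S') A).det) :
    (fun a : {i // i ∈ A} => vecM Δ a.val) =
      -((subAA (Gam S S') A)⁻¹.mulVec
        (fun a : {i // i ∈ A} => vv S S' a.val + lam * Real.sign (vecM Δ a.val))) := by
  set G := Gam S S' with hGdef
  set x := vecM Δ with hx
  set M := subAA G A with hM
  set y : {i // i ∈ A} → ℝ := fun a => x a.val with hy
  set w : {i // i ∈ A} → ℝ := fun a => vv S S' a.val + lam * Real.sign (x a.val) with hw
  have hMy : M *ᵥ y = -w := by
    funext a
    have h1 : (M *ᵥ y) a = ∑ q ∈ A, G a.val q * x q := by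
      rw [Matrix.mulVec, dotProduct]
      exact Finset.sum_coe_sort A (fun q => G a.val q * x q)
    have h2 : ∑ q ∈ A, G a.val q * x q = ∑ q : Fin d × Fin d, G a.val q * x q := by
      apply Finset.sum_subset (Finset.subset_univ A)
      intro q _ hq
      have : x q = 0 := not_not.mp (fun hne => hq ((hA q).mpr hne))
      rw [this, mul_zero]
    have h3 : (G *ᵥ x + vv S S') a.val + lam * Real.sign (x a.val) = 0 :=
      stat S S' hS hS' lam Δ hmin a.val ((hA a.val).mp a.property)
    have h4 : (M *ᵥ y) a = (G *ᵥ x) a.val := by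
      rw [h1, h2]; rfl
    rw [h4]
    simp only [Pi.add_apply] at h3
    simp only [Pi.neg_apply, hw]
    linarith
  have hinvM : M⁻¹ *ᵥ (M *ᵥ y) = y := by
    rw [Matrix.mulVec_mulVec, Matrix.nonsing_inv_mul M hinv, Matrix.one_mulVec]
  calc y = M⁻¹ *ᵥ (M *ᵥ y) := hinvM.symm
    _ = M⁻¹ *ᵥ (-w) := by rw [hMy]
    _ = -(M⁻¹ *ᵥ w) := Matrix.mulVec_neg w M⁻¹

/-- if Δ minimizes F_λ, A is its active set, s_A its active signs,
and Γ_{A,A} is invertible, then vec(Δ)_A = −(Γ_{A,A})⁻¹ (v_A + λ s_A); in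
particular Δ is the unique minimizer with that active set and those signs. -/
theorem stmt6 {d : ℕ} (hd : 1 ≤ d) (S S' : Matrix (Fin d) (Fin d) ℝ)
    (hS : S.PosSemidef) (hS' : S'.PosSemidef) (lam : ℝ) (hlam : 0 < lam)
    (Δ : Matrix (Fin d) (Fin d) ℝ)
    (hmin : IsMinOn (Fobj S S' lam) Set.univ Δ)
    (A : Finset (Fin d × Fin d)) (hA : ∀ i, i ∈ A ↔ vecM Δ i ≠ 0)
    (hinv : IsUnit (subAA (Gam S S') A).det) :
    (fun a : {i // i ∈ A} => vecM Δ a.val) =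
      -((subAA (Gam S S') A)⁻¹.mulVec
        (fun a : {i // i ∈ A} => vv S S' a.val + lam * Real.sign (vecM Δ a.val))) ∧
    ∀ Δ' : Matrix (Fin d) (Fin d) ℝ,
      IsMinOn (Fobj S S' lam) Set.univ Δ' →
      (∀ i : Fin d × Fin d, Real.sign (vecM Δ' i) = Real.sign (vecM Δ i)) →
      Δ' = Δ := by
  have hSt : Sᵀ = S := by have := hS.1; simpa [Matrix.IsHermitian] using this
  have hSt' : S'ᵀ = S' := by have := hS'.1; simpa [Matrix.IsHermitian] using this
  refine ⟨key S S' hSt hSt' lam Δ hmin A hA hinv, ?_⟩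
  intro Δ' hmin' hsgn
  have hA' : ∀ i, i ∈ A ↔ vecM Δ' i ≠ 0 := by
    intro i
    have hz : vecM Δ' i = 0 ↔ vecM Δ i = 0 := by
      rw [← Real.sign_eq_zero_iff, hsgn i, Real.sign_eq_zero_iff]
    rw [hA i, ne_eq, ne_eq, hz]
  have k := key S S' hSt hSt' lam Δ hmin A hA hinv
  have k' := key S S' hSt hSt' lam Δ' hmin' A hA' hinv
  have hfun : (fun a : {i // i ∈ A} => vv S S' a.val + lam * Real.sign (vecM Δ' a.val))
      = (fun a : {i // i ∈ A} => vv S S' a.val + lam * Real.sign (vecM Δ a.val)) := by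
    funext a; rw [hsgn]
  rw [hfun] at k'
  have heq : (fun a : {i // i ∈ A} => vecM Δ' a.val)
      = (fun a : {i // i ∈ A} => vecM Δ a.val) := k'.trans k.symm
  ext i j
  by_cases hp : (j, i) ∈ A
  · have := congrFun heq ⟨(j, i), hp⟩
    simpa [vecM] using this
  · have h1 : vecM Δ' (j, i) = 0 := not_not.mp (fun hne => hp ((hA' _).mpr hne))
    have h2 : vecM Δ (j, i) = 0 := not_not.mp (fun hne => hp ((hA _).mpr hne))
    simpa [vecM] using h1.trans h2.symm
end

section
/- Suppose Σ̂ and Σ̂' are positive semidefinite and λ > 0. Then the zero matrix minimizes F_λ over ℝ^{d×d} if and only if λ ≥ ‖Σ̂ − Σ̂'‖_∞, where ‖A‖_∞ = max_{i,j} |A_{i,j}|. -/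
open Matrix
open scoped Kronecker

lemma psd_trace_nonneg {d : ℕ} {P : Matrix (Fin d) (Fin d) ℝ} (hP : P.PosSemidef) :
    0 ≤ P.trace := by
  rw [Matrix.trace]
  apply Finset.sum_nonneg
  intro i _
  have := hP.diag_nonneg (i := i)
  simpa [dotProduct, mulVec, Pi.single_apply, Finset.sum_ite_eq] using this

lemma transpose_eq_of_psd {d : ℕ} {A : Matrix (Fin d) (Fin d) ℝ} (hA : A.PosSemidef) :
    Aᵀ = A := by
  have := hA.1
  rwa [Matrix.IsHermitian, Matrix.conjTranspose_eq_transpose_of_trivial] at this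

open scoped MatrixOrder in
lemma quad_nonneg {d : ℕ} {S S' : Matrix (Fin d) (Fin d) ℝ} (hS : S.PosSemidef)
    (hS' : S'.PosSemidef) (Δ : Matrix (Fin d) (Fin d) ℝ) :
    0 ≤ mInner (S * Δ) (Δ * S') := by
  have hB : CFC.sqrt S' * CFC.sqrt S' = S' := CFC.sqrt_mul_sqrt_self S' hS'.nonneg
  set B := CFC.sqrt S' with hBdef
  have hBsym : Bᵀ = B := transpose_eq_of_psd (CFC.sqrt_nonneg S').posSemidef
  have key : (S * Δ) * (Δ * S')ᵀ = (S * (Δ * B)) * (Δ * B)ᵀ := by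
    rw [transpose_mul, transpose_mul, hBsym, transpose_eq_of_psd hS', ← hB]
    noncomm_ring
  rw [mInner, key, Matrix.trace_mul_comm, ← Matrix.mul_assoc]
  have hpsd : ((Δ * B)ᵀ * S * (Δ * B)).PosSemidef := by
    have := hS.conjTranspose_mul_mul_same (Δ * B)
    rwa [Matrix.conjTranspose_eq_transpose_of_trivial] at this
  exact psd_trace_nonneg hpsd

lemma mInner_entries {d : ℕ} (A B : Matrix (Fin d) (Fin d) ℝ) :
    mInner A B = ∑ i, ∑ j, A i j * B i j := by
  simp [mInner, Matrix.trace, Matrix.mul_apply, Matrix.diag, Matrix.transpose_apply]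

lemma mInner_smul_smul {d : ℕ} (t : ℝ) (A B : Matrix (Fin d) (Fin d) ℝ) :
    mInner (t • A) (t • B) = t ^ 2 * mInner A B := by
  simp [mInner, Matrix.transpose_smul, Matrix.smul_mul, Matrix.mul_smul, smul_eq_mul]
  ring

lemma mInner_smul_left {d : ℕ} (t : ℝ) (A B : Matrix (Fin d) (Fin d) ℝ) :
    mInner (t • A) B = t * mInner A B := by
  simp [mInner, Matrix.smul_mul, smul_eq_mul]

lemma LD_smul {d : ℕ} (S S' Δ : Matrix (Fin d) (Fin d) ℝ) (t : ℝ) :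
    LD S S' (t • Δ) =
      t ^ 2 * ((1 / 4) * (mInner (S * Δ) (Δ * S') + mInner (S' * Δ) (Δ * S)))
        - t * mInner Δ (S - S') := by
  rw [LD, mul_smul_comm, mul_smul_comm, smul_mul_assoc, smul_mul_assoc,
    mInner_smul_smul, mInner_smul_smul, mInner_smul_left]
  ring

/-- the zero matrix minimizes F_λ iff λ ≥ ‖Σ̂ − Σ̂'‖_∞, the maximum
of the absolute values of the entries of Σ̂ − Σ̂'. -/
theorem stmt8 {d : ℕ} (hd : 1 ≤ d) (S S' : Matrix (Fin d) (Fin d) ℝ)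
    (hS : S.PosSemidef) (hS' : S'.PosSemidef) (lam : ℝ) (hlam : 0 < lam) :
    IsMinOn (Fobj S S' lam) Set.univ (0 : Matrix (Fin d) (Fin d) ℝ) ↔
      (⨆ p : Fin d × Fin d, |(S - S') p.1 p.2|) ≤ lam := by
  have h0 : Fobj S S' lam 0 = 0 := by simp [Fobj, LD, mInner]
  rw [isMinOn_iff]
  constructor
  · intro hmin
    apply Real.iSup_le _ hlam.le
    rintro ⟨i, j⟩
    set E := single i j (1 : ℝ) with hE
    set a := (1 / 4) * (mInner (S * E) (E * S') + mInner (S' * E) (E * S)) with ha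
    have ha0 : 0 ≤ a := by
      have h1 := quad_nonneg hS hS' E
      have h2 := quad_nonneg hS' hS E
      rw [ha]; linarith
    have hlin : mInner E (S - S') = (S - S') i j := by
      rw [mInner_entries]
      simp [hE, single_apply, ite_and, Finset.sum_ite_eq]
    have hsum : ∀ t : ℝ, ∑ x, ∑ y, |(t • E) x y| = |t| := by
      intro t
      simp [hE, single_apply, ite_and, apply_ite abs, Finset.sum_ite_eq, abs_mul,
        Matrix.smul_apply, smul_eq_mul, mul_ite, mul_one, mul_zero]
    have key : ∀ t : ℝ, 0 ≤ t ^ 2 * a - t * (S - S') i j + lam * |t| := by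
      intro t
      have hm := hmin (t • E) (Set.mem_univ _)
      rw [h0, Fobj, LD_smul, hsum, hlin, ← ha] at hm
      linarith
    refine le_of_forall_pos_le_add ?_
    intro δ hδ
    set ε := δ / (a + 1) with hε
    have hεpos : 0 < ε := by positivity
    have h1 := key ε
    have h2 := key (-ε)
    rw [abs_of_pos hεpos] at h1
    rw [abs_neg, abs_of_pos hεpos] at h2
    have habs : |(S - S') i j| ≤ lam + ε * a := by
      apply abs_le.mpr
      constructor <;> nlinarith
    have hεa : ε * a ≤ δ := by
      rw [hε]
      rw [div_mul_eq_mul_div, div_le_iff₀ (by positivity)]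
      nlinarith
    linarith
  · intro h Δ _
    rw [h0, Fobj, LD]
    have hM : ∀ x y, |(S - S') x y| ≤ lam := by
      intro x y
      refine le_trans ?_ h
      exact le_ciSup (f := fun p : Fin d × Fin d => |(S - S') p.1 p.2|)
        (Set.Finite.bddAbove (Set.finite_range _)) (x, y)
    have hlin : mInner Δ (S - S') ≤ lam * ∑ i, ∑ j, |Δ i j| := by
      rw [mInner_entries, Finset.mul_sum]
      apply Finset.sum_le_sum
      intro i _
      rw [Finset.mul_sum]
      apply Finset.sum_le_sum
      intro j _
      calc Δ i j * (S - S') i j ≤ |Δ i j * (S - S') i j| := le_abs_self _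
        _ = |Δ i j| * |(S - S') i j| := abs_mul _ _
        _ ≤ |Δ i j| * lam := mul_le_mul_of_nonneg_left (hM i j) (abs_nonneg _)
        _ = lam * |Δ i j| := mul_comm _ _
    have h1 := quad_nonneg hS hS' Δ
    have h2 := quad_nonneg hS' hS Δ
    linarith
end
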